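/- Consider maximizing over binary sequences (a_1,…,a_T) ∈ {0,1}^T the objective Σ_{t=1}^T [μ_{n_t−1}·𝟙{a_t=1} + λ·𝟙{a_t=0} − (T−t)(Γ_{n_t} − Γ_{n_{t−1}})], where n_t = Σ_{s≤t} 𝟙{a_s=1} and (μ_n)_{n≥0}, (Γ_n)_{n≥0} are given real sequences with Γ defined at indices 0,…,T. This maximum equals max_{0≤n≤T} { T·Γ_0 + (T−n)·(λ − min_{0≤s≤n} Γ_s) + Σ_{s=1}^n (μ_{s−1} − Γ_{s−1}) }. -/

import Mathlib

/-- Number of pulls of the stochastic arm among the first `k` periods. -/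
def pullCount {T : ℕ} (a : Fin T → Bool) (k : ℕ) : ℕ :=
  (Finset.univ.filter (fun i : Fin T => (i : ℕ) < k ∧ a i = true)).card

open Finset

namespace S12

def cnt (b : ℕ → Bool) (k : ℕ) : ℕ := ((Finset.range k).filter (fun t => b t = true)).card

lemma cnt_zero (b : ℕ → Bool) : cnt b 0 = 0 := by simp [cnt]

lemma cnt_succ (b : ℕ → Bool) (k : ℕ) : cnt b (k+1) = cnt b k + if b k then 1 else 0 := by
  unfold cnt
  rw [Finset.range_add_one, Finset.filter_insert]
  by_cases h : b k = true
  · rw [if_pos h, if_pos h, Finset.card_insert_of_notMem (by simp)]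
  · rw [if_neg h, if_neg (by simpa using h)]; simp

lemma cnt_mono (b : ℕ → Bool) {k l : ℕ} (h : k ≤ l) : cnt b k ≤ cnt b l :=
  Finset.card_le_card (Finset.filter_subset_filter _ (Finset.range_subset_range.2 h))

lemma cnt_le (b : ℕ → Bool) (k : ℕ) : cnt b k ≤ k :=
  le_trans (Finset.card_filter_le _ _) (by simp)

lemma abel (B : ℕ → ℝ) (T : ℕ) :
    ∑ t ∈ range T, ((T:ℝ) - t - 1) * (B (t+1) - B t)
      = ∑ t ∈ range T, B t - T * B 0 := by
  induction T with
  | zero => simp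
  | succ T ih =>
      have h1 : ∀ t ∈ range (T+1), ((T+1:ℕ):ℝ) - t - 1 = ((T:ℝ) - t - 1) + 1 := by
        intro t _; push_cast; ring
      calc ∑ t ∈ range (T+1), (((T+1:ℕ):ℝ) - t - 1) * (B (t+1) - B t)
          = ∑ t ∈ range (T+1), (((T:ℝ) - t - 1) * (B (t+1) - B t) + (B (t+1) - B t)) := by
            apply Finset.sum_congr rfl; intro t ht; rw [h1 t ht]; ring
        _ = (∑ t ∈ range (T+1), ((T:ℝ) - t - 1) * (B (t+1) - B t))
              + ∑ t ∈ range (T+1), (B (t+1) - B t) := Finset.sum_add_distrib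
        _ = (∑ t ∈ range T, ((T:ℝ) - t - 1) * (B (t+1) - B t)
              + ((T:ℝ) - T - 1) * (B (T+1) - B T)) + (B (T+1) - B 0) := by
            rw [Finset.sum_range_succ, Finset.sum_range_sub]
        _ = ∑ t ∈ range (T+1), B t - (T+1:ℕ) * B 0 := by
            rw [ih, Finset.sum_range_succ]; push_cast; ring

lemma pullsum (b : ℕ → Bool) (F : ℕ → ℝ) (k : ℕ) :
    ∑ t ∈ (range k).filter (fun t => b t = true), F (cnt b t)
      = ∑ s ∈ range (cnt b k), F s := by
  induction k with
  | zero => simp [cnt_zero]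
  | succ k ih =>
    rw [range_add_one, filter_insert, cnt_succ]
    by_cases h : b k = true
    · rw [if_pos h, if_pos h, Finset.sum_insert (by simp), ih, Finset.sum_range_succ]
      ring
    · rw [if_neg h, if_neg (by simpa using h)]
      simpa using ih


lemma pullCount_eq_cnt {T : ℕ} (a : Fin T → Bool) (k : ℕ) :
    pullCount a k = cnt (fun t => if h : t < T then a ⟨t, h⟩ else false) k := by
  unfold pullCount cnt
  rw [← Finset.card_image_of_injective _ Fin.val_injective]
  congr 1
  ext t
  simp only [Finset.mem_image, Finset.mem_filter, Finset.mem_univ, true_and, Finset.mem_range]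
  constructor
  · rintro ⟨i, ⟨hik, hai⟩, rfl⟩
    exact ⟨hik, by simp [i.isLt, hai]⟩
  · rintro ⟨htk, hb⟩
    by_cases hT : t < T
    · exact ⟨⟨t, hT⟩, ⟨htk, by simpa [hT] using hb⟩, rfl⟩
    · simp [hT] at hb


lemma value (b : ℕ → Bool) (T : ℕ) (lam : ℝ) (m G : ℕ → ℝ) :
    ∑ t ∈ range T, ((if b t then m (cnt b t) else lam)
        - ((T:ℝ) - t - 1) * (G (cnt b (t+1)) - G (cnt b t)))
    = (T:ℝ) * G 0 + (∑ s ∈ range (cnt b T), (m s - G s))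
      + ∑ t ∈ (range T).filter (fun t => ¬ b t = true), (lam - G (cnt b t)) := by
  rw [Finset.sum_sub_distrib, abel (fun t => G (cnt b t)) T, cnt_zero]
  have hsplit : ∑ t ∈ range T, ((if b t then m (cnt b t) else lam) - G (cnt b t))
      = (∑ t ∈ (range T).filter (fun t => b t = true),
            ((if b t then m (cnt b t) else lam) - G (cnt b t)))
        + ∑ t ∈ (range T).filter (fun t => ¬ b t = true),
            ((if b t then m (cnt b t) else lam) - G (cnt b t)) :=
    (Finset.sum_filter_add_sum_filter_not (range T) (fun t => b t = true) _).symm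
  have h1 : ∑ t ∈ (range T).filter (fun t => b t = true),
        ((if b t then m (cnt b t) else lam) - G (cnt b t))
      = ∑ s ∈ range (cnt b T), (m s - G s) := by
    rw [← pullsum b (fun s => m s - G s) T]
    apply Finset.sum_congr rfl
    intro t ht
    rw [if_pos (Finset.mem_filter.1 ht).2]
  have h2 : ∑ t ∈ (range T).filter (fun t => ¬ b t = true),
        ((if b t then m (cnt b t) else lam) - G (cnt b t))
      = ∑ t ∈ (range T).filter (fun t => ¬ b t = true), (lam - G (cnt b t)) := by
    apply Finset.sum_congr rfl
    intro t ht
    rw [if_neg (Finset.mem_filter.1 ht).2]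
  have := hsplit
  rw [Finset.sum_sub_distrib] at hsplit
  linarith [h1, h2, hsplit]

end S12

open S12 in
/-- Reformulation of the single-armed inner problem: maximizing over binary sequences
`(a_1,…,a_T)` the objective
`Σ_t [μ_{n_t−1}·𝟙{a_t=1} + λ·𝟙{a_t=0} − (T−t)(Γ_{n_t} − Γ_{n_{t−1}})]`
equals `max_{0≤n≤T} {T·Γ_0 + (T−n)(λ − min_{0≤s≤n} Γ_s) + Σ_{s=1}^n (μ_{s−1} − Γ_{s−1})}`. -/
theorem stmt_12 (T : ℕ) (lam : ℝ) (m G : ℕ → ℝ) :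
    (⨆ a : Fin T → Bool,
      ∑ t : Fin T,
        ((if a t then m (pullCount a t) else lam)
          - ((T : ℝ) - (t : ℕ) - 1) * (G (pullCount a ((t : ℕ) + 1)) - G (pullCount a t))))
    = ⨆ n : Fin (T + 1),
        ((T : ℝ) * G 0 + ((T : ℝ) - (n : ℕ)) * (lam - ⨅ s : Fin ((n : ℕ) + 1), G s)
          + ∑ s ∈ Finset.range (n : ℕ), (m s - G s)) := by
  -- notation
  set g : Fin (T+1) → ℝ := fun n =>
    (T : ℝ) * G 0 + ((T : ℝ) - (n : ℕ)) * (lam - ⨅ s : Fin ((n : ℕ) + 1), G s)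
      + ∑ s ∈ Finset.range (n : ℕ), (m s - G s) with hg
  set f : (Fin T → Bool) → ℝ := fun a =>
    ∑ t : Fin T,
        ((if a t then m (pullCount a t) else lam)
          - ((T : ℝ) - (t : ℕ) - 1) * (G (pullCount a ((t : ℕ) + 1)) - G (pullCount a t))) with hf
  have hfval : ∀ a : Fin T → Bool,
      f a = (T:ℝ) * G 0
        + (∑ s ∈ range (cnt (fun t => if h : t < T then a ⟨t, h⟩ else false) T), (m s - G s))
        + ∑ t ∈ (range T).filter
            (fun t => ¬ (fun t => if h : t < T then a ⟨t, h⟩ else false) t = true),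
            (lam - G (cnt (fun t => if h : t < T then a ⟨t, h⟩ else false) t)) := by
    intro a
    set b : ℕ → Bool := fun t => if h : t < T then a ⟨t, h⟩ else false with hb
    rw [← value b T lam m G, hf]
    rw [← Fin.sum_univ_eq_sum_range (fun t =>
      ((if b t then m (cnt b t) else lam)
        - ((T:ℝ) - t - 1) * (G (cnt b (t+1)) - G (cnt b t)))) T]
    apply Finset.sum_congr rfl
    intro t _
    have hbt : b (t : ℕ) = a t := by simp [hb, t.isLt]
    rw [pullCount_eq_cnt a, pullCount_eq_cnt a, ← hb, hbt]
  apply le_antisymm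
  · apply ciSup_le
    intro a
    set b : ℕ → Bool := fun t => if h : t < T then a ⟨t, h⟩ else false with hb
    set n : ℕ := cnt b T with hn
    have hnT : n ≤ T := cnt_le b T
    have hidle : ∑ t ∈ (range T).filter (fun t => ¬ b t = true), (lam - G (cnt b t))
        ≤ ((T : ℝ) - n) * (lam - ⨅ s : Fin (n + 1), G s) := by
      have hcard : ((range T).filter (fun t => ¬ b t = true)).card = T - n := by
        have h := Finset.card_filter_add_card_filter_not
          (s := range T) (p := fun t => b t = true)
        simp only [Finset.card_range] at h
        have hcnt : ((range T).filter (fun t => b t = true)).card = n := rfl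
        omega
      have hle : ∀ t ∈ (range T).filter (fun t => ¬ b t = true),
          lam - G (cnt b t) ≤ lam - ⨅ s : Fin (n + 1), G s := by
        intro t ht
        have htT : t < T := Finset.mem_range.1 (Finset.mem_filter.1 ht).1
        have h1 : cnt b t ≤ n := cnt_mono b (le_of_lt htT)
        have h2 : (⨅ s : Fin (n + 1), G s) ≤ G (cnt b t) :=
          ciInf_le (Set.Finite.bddBelow (Set.finite_range _)) (⟨cnt b t, by omega⟩ : Fin (n + 1))
        linarith
      calc ∑ t ∈ (range T).filter (fun t => ¬ b t = true), (lam - G (cnt b t))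
          ≤ ((range T).filter (fun t => ¬ b t = true)).card
              • (lam - ⨅ s : Fin (n + 1), G s) := Finset.sum_le_card_nsmul _ _ _ hle
        _ = ((T : ℝ) - n) * (lam - ⨅ s : Fin (n + 1), G s) := by
            rw [hcard, nsmul_eq_mul, Nat.cast_sub hnT]
    have : f a ≤ g ⟨n, by omega⟩ := by
      rw [hfval a, hg]
      simp only [← hb, ← hn]
      linarith [hidle]
    exact le_trans this (le_ciSup (Set.Finite.bddAbove (Set.finite_range g)) _)
  · apply ciSup_le
    intro n
    have hnT : (n : ℕ) ≤ T := by omega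
    obtain ⟨s₀, hs₀⟩ := Finite.exists_min (fun s : Fin ((n : ℕ) + 1) => G s)
    have hinf : (⨅ s : Fin ((n : ℕ) + 1), G s) = G s₀ :=
      le_antisymm (ciInf_le (Set.Finite.bddBelow (Set.finite_range _)) s₀)
        (le_ciInf hs₀)
    have hs₀n : (s₀ : ℕ) ≤ (n : ℕ) := by omega
    set a : Fin T → Bool :=
      fun t => decide ((t : ℕ) < (s₀ : ℕ) ∨ T - (n : ℕ) + (s₀ : ℕ) ≤ (t : ℕ)) with ha
    set b : ℕ → Bool := fun t => if h : t < T then a ⟨t, h⟩ else false with hb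
    have hbk : ∀ k, k < T → (b k = true ↔ (k < (s₀ : ℕ) ∨ T - (n : ℕ) + (s₀ : ℕ) ≤ k)) := by
      intro k hk
      simp [hb, ha, hk]
    have hNform : ∀ k, k ≤ T →
        cnt b k = min k (s₀ : ℕ) + (k - (T - (n : ℕ) + (s₀ : ℕ))) := by
      intro k
      induction k with
      | zero => intro _; simp [cnt_zero]
      | succ k ih =>
        intro hk1
        have hk : k < T := by omega
        rw [cnt_succ, ih (by omega)]
        by_cases hc : (k < (s₀ : ℕ) ∨ T - (n : ℕ) + (s₀ : ℕ) ≤ k)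
        · rw [if_pos ((hbk k hk).2 hc)]
          omega
        · rw [if_neg (show ¬ b k = true from fun h => hc ((hbk k hk).1 h))]
          omega
    have hNT : cnt b T = (n : ℕ) := by rw [hNform T le_rfl]; omega
    have hidle : ∑ t ∈ (range T).filter (fun t => ¬ b t = true), (lam - G (cnt b t))
        = ((T : ℝ) - (n : ℕ)) * (lam - G (s₀ : ℕ)) := by
      have hcard : ((range T).filter (fun t => ¬ b t = true)).card = T - (n : ℕ) := by
        have h := Finset.card_filter_add_card_filter_not
          (s := range T) (p := fun t => b t = true)
        simp only [Finset.card_range] at h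
        have hcnt : ((range T).filter (fun t => b t = true)).card = cnt b T := rfl
        omega
      have hconst : ∀ t ∈ (range T).filter (fun t => ¬ b t = true),
          lam - G (cnt b t) = lam - G (s₀ : ℕ) := by
        intro t ht
        have htT : t < T := Finset.mem_range.1 (Finset.mem_filter.1 ht).1
        have hbt : ¬ (t < (s₀ : ℕ) ∨ T - (n : ℕ) + (s₀ : ℕ) ≤ t) :=
          fun hc => (Finset.mem_filter.1 ht).2 ((hbk t htT).2 hc)
        have : cnt b t = (s₀ : ℕ) := by rw [hNform t (le_of_lt htT)]; omega
        rw [this]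
      rw [Finset.sum_congr rfl hconst, Finset.sum_const, hcard, nsmul_eq_mul,
        Nat.cast_sub hnT]
    have hfa : f a = g n := by
      rw [hfval a]
      simp only [← hb]
      rw [hNT, hidle, hg]
      simp only [hinf]
      ring
    calc g n = f a := hfa.symm
      _ ≤ ⨆ a, f a := le_ciSup (Set.Finite.bddAbove (Set.finite_range f)) a
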